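/- Let f : F_q → F_p be weakly regular s-plateaued with sign ε and dual g. Then for every x ∈ F_q one has Σ_{β ∈ Supp(W_f)} ξ_p^{g(β) + Tr(βx)} = ε · η_0(−1)^n · √(p*)^{n−s} · ξ_p^{f(x)}. -/

import Mathlib

open scoped BigOperators Classical

noncomputable section

/-- `ξ_p^j` for `j : ZMod p`, where `ξ_p = exp(2πi/p)` and the exponent `j`
is lifted to a natural number. -/
def ep (p : ℕ) (j : ZMod p) : ℂ :=
  Complex.exp (2 * Real.pi * Complex.I * (j.val : ℂ) / (p : ℂ))

/-- `√(p*)`: equal to `√p` if `p ≡ 1 (mod 4)` and to `i√p` if `p ≡ 3 (mod 4)`. -/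
def sqrtPStar (p : ℕ) : ℂ :=
  if p % 4 = 1 then ((Real.sqrt p : ℝ) : ℂ) else Complex.I * ((Real.sqrt p : ℝ) : ℂ)

/-- The quadratic character `η₀` of `F_p` (extended by `η₀(0) = 0`), with values in `ℂ`. -/
def eta0 (p : ℕ) [Fact p.Prime] (j : ZMod p) : ℂ :=
  ((quadraticChar (ZMod p) j : ℤ) : ℂ)

/-- The Walsh transform of `f : F_q → F_p`. -/
def walsh (p : ℕ) {F : Type*} [Field F] [Fintype F] [Algebra (ZMod p) F]
    (f : F → ZMod p) (β : F) : ℂ :=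
  ∑ x : F, ep p (f x - Algebra.trace (ZMod p) F (β * x))

section Aux

variable (p : ℕ) [Fact p.Prime]

lemma zeta_prim : IsPrimitiveRoot (Complex.exp (2 * Real.pi * Complex.I / p)) p := by
  have h := Complex.isPrimitiveRoot_exp p (Fact.out : p.Prime).ne_zero
  convert h using 3 <;> push_cast <;> ring

lemma ep_eq_pow (j : ZMod p) :
    ep p j = Complex.exp (2 * Real.pi * Complex.I / p) ^ j.val := by
  rw [ep, ← Complex.exp_nat_mul]
  ring_nf

lemma ep_add (a b : ZMod p) : ep p (a + b) = ep p a * ep p b := by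
  haveI : NeZero p := ⟨(Fact.out : p.Prime).ne_zero⟩
  rw [ep_eq_pow, ep_eq_pow, ep_eq_pow, ← pow_add, ZMod.val_add,
    ← pow_eq_pow_mod _ (zeta_prim p).pow_eq_one]

lemma ep_zero : ep p 0 = 1 := by
  haveI : NeZero p := ⟨(Fact.out : p.Prime).ne_zero⟩
  simp [ep, ZMod.val_zero]

lemma ep_eq_one_iff (j : ZMod p) : ep p j = 1 ↔ j = 0 := by
  haveI : NeZero p := ⟨(Fact.out : p.Prime).ne_zero⟩
  rw [ep_eq_pow, (zeta_prim p).pow_eq_one_iff_dvd]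
  constructor
  · intro h
    exact (ZMod.val_eq_zero j).mp (Nat.eq_zero_of_dvd_of_lt h (ZMod.val_lt j))
  · rintro rfl; simp [ZMod.val_zero]

variable {F : Type*} [Field F] [Fintype F] [Algebra (ZMod p) F]

def chiF (z : F) : AddChar F ℂ where
  toFun β := ep p (Algebra.trace (ZMod p) F (β * z))
  map_zero_eq_one' := by simp [ep_zero]
  map_add_eq_mul' a b := by
    simp only [add_mul, map_add, ep_add]

lemma sum_chi (z : F) :
    ∑ β : F, ep p (Algebra.trace (ZMod p) F (β * z))
      = if z = 0 then (Fintype.card F : ℂ) else 0 := by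
  split_ifs with h
  · subst h; simp [ep_zero]
  · haveI : FiniteDimensional (ZMod p) F := Module.Finite.of_finite
    have htr := (traceForm_nondegenerate (ZMod p) F).1 z
    simp_rw [Algebra.traceForm_apply] at htr
    have hb : ∃ b : F, Algebra.trace (ZMod p) F (z * b) ≠ 0 := by
      by_contra hf
      push_neg at hf
      exact h (htr hf)
    obtain ⟨b, hb⟩ := hb
    have hne : chiF p z ≠ 1 := by
      rw [AddChar.ne_one_iff]
      refine ⟨b, ?_⟩
      intro hone
      have : ep p (Algebra.trace (ZMod p) F (b * z)) = 1 := hone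
      rw [ep_eq_one_iff] at this
      exact hb (by rwa [mul_comm] at this)
    have := AddChar.sum_eq_zero_of_ne_one hne
    simpa [chiF] using this

lemma eta0_neg_one (hp : p ≠ 2) :
    eta0 p (-1) = if p % 4 = 1 then 1 else -1 := by
  have hchar : ringChar (ZMod p) ≠ 2 := by
    rw [ZMod.ringChar_zmod_n]; exact hp
  have h := quadraticChar_neg_one hchar
  rw [ZMod.card] at h
  have hodd : p % 2 = 1 := Nat.odd_iff.mp (Nat.Prime.odd_of_ne_two (Fact.out : p.Prime) hp)
  have h4 : p % 4 = 1 ∨ p % 4 = 3 := by omega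
  rcases h4 with h4 | h4
  · rw [eta0, h, ZMod.χ₄_nat_one_mod_four h4]
    simp [h4]
  · rw [eta0, h, ZMod.χ₄_nat_three_mod_four h4]
    simp [h4]

end Aux

section More

variable (p : ℕ) [Fact p.Prime]

lemma sqrtPStar_sq (hp : p ≠ 2) :
    sqrtPStar p ^ 2 = eta0 p (-1) * (p : ℂ) := by
  have hp0 : (0 : ℝ) ≤ (p : ℝ) := Nat.cast_nonneg p
  have hsq : ((Real.sqrt p : ℝ) : ℂ) ^ 2 = (p : ℂ) := by
    rw [← Complex.ofReal_pow, Real.sq_sqrt hp0]; norm_cast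
  rw [eta0_neg_one p hp, sqrtPStar]
  split_ifs with h
  · rw [hsq]; ring
  · rw [mul_pow, hsq, Complex.I_sq]

lemma sqrtPStar_ne_zero (hp : p ≠ 2) : sqrtPStar p ≠ 0 := by
  have hppos : (0 : ℝ) < (p : ℝ) := by
    exact_mod_cast (Fact.out : p.Prime).pos
  have h : ((Real.sqrt p : ℝ) : ℂ) ≠ 0 := by
    simp only [ne_eq, Complex.ofReal_eq_zero]
    exact ne_of_gt (Real.sqrt_pos.mpr hppos)
  rw [sqrtPStar]
  split_ifs
  · exact h
  · exact mul_ne_zero Complex.I_ne_zero h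

end More

/-- `f` is weakly regular `s`-plateaued with sign `ε` and dual `g`:
`W_f(β) = ε √(p*)^{n+s} ξ_p^{g(β)}` on the Walsh support, `W_f(β) = 0` off it,
and `g` vanishes off the Walsh support. -/
def IsWeaklyRegularPlateaued (p n s : ℕ) {F : Type*} [Field F] [Fintype F]
    [Algebra (ZMod p) F] (f : F → ZMod p) (ε : ℂ) (g : F → ZMod p) : Prop :=
  (ε = 1 ∨ ε = -1) ∧
  (∀ β : F, walsh p f β ≠ 0 →
      walsh p f β = ε * sqrtPStar p ^ (n + s) * ep p (g β)) ∧
  (∀ β : F, walsh p f β = 0 → g β = 0)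

/-- `f` lies in the class `WRP`: weakly regular `s`-plateaued with sign `ε` and dual `g`,
unbalanced, `f(0) = 0`, and `f(ax) = a^h f(x)` for some positive even `h` with
`gcd(h-1, p-1) = 1`. -/
def IsWRP (p n s : ℕ) {F : Type*} [Field F] [Fintype F]
    [Algebra (ZMod p) F] (f : F → ZMod p) (ε : ℂ) (g : F → ZMod p) : Prop :=
  IsWeaklyRegularPlateaued p n s f ε g ∧
  walsh p f 0 ≠ 0 ∧
  f 0 = 0 ∧
  ∃ h : ℕ, 0 < h ∧ Even h ∧ Nat.gcd (h - 1) (p - 1) = 1 ∧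
    ∀ (a : (ZMod p)ˣ) (x : F),
      f (algebraMap (ZMod p) F (a : ZMod p) * x) = (a : ZMod p) ^ h * f x

theorem statement_0 (p n s : ℕ) [Fact p.Prime] (hp : p ≠ 2) (hn : 0 < n) (hs : s ≤ n)
    {F : Type*} [Field F] [Fintype F] [Algebra (ZMod p) F]
    (hq : Fintype.card F = p ^ n)
    (f g : F → ZMod p) (ε : ℂ)
    (hf : IsWeaklyRegularPlateaued p n s f ε g) :
    ∀ x : F,
      ∑ β ∈ Finset.univ.filter (fun β : F => walsh p f β ≠ 0),
          ep p (g β + Algebra.trace (ZMod p) F (β * x))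
        = ε * (eta0 p (-1)) ^ n * sqrtPStar p ^ (n - s) * ep p (f x) := by
  intro x
  set S := ∑ β ∈ Finset.univ.filter (fun β : F => walsh p f β ≠ 0),
      ep p (g β + Algebra.trace (ZMod p) F (β * x)) with hS
  -- Step A: Fourier inversion
  have hT : ∑ β : F, walsh p f β * ep p (Algebra.trace (ZMod p) F (β * x))
      = (p : ℂ) ^ n * ep p (f x) := by
    have hterm : ∀ β y : F,
        ep p (f y - Algebra.trace (ZMod p) F (β * y)) *
          ep p (Algebra.trace (ZMod p) F (β * x))
        = ep p (f y) * ep p (Algebra.trace (ZMod p) F (β * (x - y))) := by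
      intro β y
      rw [← ep_add, ← ep_add]
      congr 1
      rw [mul_sub, map_sub]
      ring
    simp_rw [walsh, Finset.sum_mul, hterm]
    rw [Finset.sum_comm]
    simp_rw [← Finset.mul_sum, sum_chi]
    have hite : ∀ y : F, (if x - y = 0 then (Fintype.card F : ℂ) else 0)
        = if y = x then ((p : ℂ)) ^ n else 0 := by
      intro y
      rw [sub_eq_zero, hq]
      push_cast
      by_cases h : y = x
      · simp [h]
      · simp [h, Ne.symm h]
    simp_rw [hite, mul_ite, mul_zero]
    rw [Finset.sum_ite_eq' Finset.univ x (fun y => ep p (f y) * (p : ℂ) ^ n)]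
    simp [mul_comm]
  -- Step B: restrict to support
  have hB : ∑ β : F, walsh p f β * ep p (Algebra.trace (ZMod p) F (β * x))
      = ε * sqrtPStar p ^ (n + s) * S := by
    rw [hS, Finset.mul_sum]
    rw [← Finset.sum_filter_of_ne (p := fun β : F => walsh p f β ≠ 0)
      (by intro β _ hne h0; exact hne (by rw [h0, zero_mul]))]
    apply Finset.sum_congr rfl
    intro β hβ
    have hβ' : walsh p f β ≠ 0 := (Finset.mem_filter.mp hβ).2
    rw [hf.2.1 β hβ', ep_add]
    ring
  have key : ε * sqrtPStar p ^ (n + s) * S = (p : ℂ) ^ n * ep p (f x) := by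
    rw [← hB, hT]
  -- constants
  set η := eta0 p (-1) with hη
  have hε2 : ε * ε = 1 := by rcases hf.1 with h | h <;> rw [h] <;> ring
  have hη2 : η * η = 1 := by
    rw [hη, eta0_neg_one p hp]
    split_ifs <;> ring
  have hprod : sqrtPStar p ^ (n + s) * sqrtPStar p ^ (n - s) = η ^ n * (p : ℂ) ^ n := by
    rw [← pow_add]
    have h2n : n + s + (n - s) = 2 * n := by omega
    rw [h2n, pow_mul, sqrtPStar_sq p hp, mul_pow, hη]
  have hcne : ε * sqrtPStar p ^ (n + s) ≠ 0 := by
    apply mul_ne_zero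
    · rcases hf.1 with h | h <;> rw [h] <;> norm_num
    · exact pow_ne_zero _ (sqrtPStar_ne_zero p hp)
  apply mul_left_cancel₀ hcne
  rw [key]
  have expand : ε * sqrtPStar p ^ (n + s) * (ε * η ^ n * sqrtPStar p ^ (n - s) * ep p (f x))
      = (ε * ε) * ((sqrtPStar p ^ (n + s) * sqrtPStar p ^ (n - s)) * (η ^ n * ep p (f x))) := by
    ring
  rw [expand, hε2, hprod, one_mul]
  have : η ^ n * (p : ℂ) ^ n * (η ^ n * ep p (f x))
      = (η * η) ^ n * ((p : ℂ) ^ n * ep p (f x)) := by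
    rw [mul_pow]; ring
  rw [this, hη2, one_pow, one_mul]
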